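/- Assume δ > 0, β₀ > 0 and β₁ < −δ/(β₀(1 − 2h(x₀))). Let (ω_c, τ_c) be the unique positive solution of sin(ωτ)/(ωτ) = (δ + β₀β₁)/(2β₀β₁) and (cos(ωτ) − 1)/(ωτ)² = 1/(2β₀β₁τ), with ω_cτ_c ∈ (0, π). Then Re(Δ_λ(iω_c, τ_c)) > 0 and Im(Δ_λ(iω_c, τ_c)) > 0; in particular, Δ_λ(iω_c, τ_c) ≠ 0, so ±iω_c are simple zeros of Δ(·, τ_c). -/

import Mathlib

/-- The partial derivative in `λ` of the characteristic function:
`Δ_λ(λ,τ) = 1 − (2β₀β₁/τ)∫_{−τ}^{0} s e^{λ s} ds`. -/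
noncomputable def charFnD (β₀ β₁ τ : ℝ) (lam : ℂ) : ℂ :=
  1 - ((2 * β₀ * β₁ / τ : ℝ) : ℂ) * ∫ s in (-τ)..(0 : ℝ), (s : ℂ) * Complex.exp (lam * (s : ℂ))

/-- `h(x) = sin(x)/x`. -/
noncomputable def hfun (x : ℝ) : ℝ := Real.sin x / x

/-- `x₀`, the smallest `x > 0` with `x = tan x` and `h(x) > 0` (numerically `x₀ ≈ 7.725`). -/
noncomputable def xZero : ℝ := sInf {x : ℝ | 0 < x ∧ x = Real.tan x ∧ 0 < hfun x}

/-- The system: `sin(ωτ)/(ωτ) = (δ+β₀β₁)/(2β₀β₁)` and `(cos(ωτ) − 1)/(ωτ)² = 1/(2β₀β₁τ)`. -/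
def sys (δ β₀ β₁ ω τ : ℝ) : Prop :=
  Real.sin (ω * τ) / (ω * τ) = (δ + β₀ * β₁) / (2 * β₀ * β₁) ∧
  (Real.cos (ω * τ) - 1) / (ω * τ) ^ 2 = 1 / (2 * β₀ * β₁ * τ)

/-- Explicit value of `∫_{-τ}^{0} s e^{iωs} ds`. -/
lemma key_integral (ω τ : ℝ) (hω : ω ≠ 0) :
    ∫ s in (-τ)..(0 : ℝ), (s : ℂ) * Complex.exp ((Complex.I * ω) * s) =
      (((1 - Real.cos (ω*τ) - (ω*τ)*Real.sin (ω*τ))/ω^2 : ℝ) : ℂ)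
      + (((Real.sin (ω*τ) - (ω*τ)*Real.cos (ω*τ))/ω^2 : ℝ) : ℂ) * Complex.I := by
  have hω' : (ω:ℂ) ≠ 0 := Complex.ofReal_ne_zero.mpr hω
  have hderiv : ∀ u ∈ Set.uIcc (-τ) (0:ℝ),
      HasDerivAt (fun s : ℝ => (((1/ω^2 : ℝ) : ℂ) - ((s/ω : ℝ) : ℂ) * Complex.I)
          * Complex.exp ((Complex.I * ω) * s))
        ((u : ℂ) * Complex.exp ((Complex.I * ω) * u)) u := by
    intro u _
    have hexp : HasDerivAt (fun z : ℂ => Complex.exp ((Complex.I * ω) * z))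
        ((Complex.I * ω) * Complex.exp ((Complex.I * ω) * u)) (u:ℂ) := by
      simpa [mul_comm] using ((hasDerivAt_id ((u:ℂ))).const_mul (Complex.I * ω)).cexp
    have hlin : HasDerivAt (fun z : ℂ => 1 / (ω:ℂ)^2 - z/ω * Complex.I)
        (-(1/(ω:ℂ) * Complex.I)) (u:ℂ) :=
      (((hasDerivAt_id ((u:ℂ))).div_const (ω:ℂ)).mul_const Complex.I).const_sub (1/(ω:ℂ)^2)
    have he := (hlin.mul hexp).comp_ofReal
    convert he using 1
    · ext s; simp only [Pi.mul_apply]; push_cast; ring_nf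
    · field_simp
      ring_nf
      simp only [Complex.I_sq]
      ring
  rw [intervalIntegral.integral_eq_sub_of_hasDerivAt hderiv
      ((Continuous.intervalIntegrable (by fun_prop) _ _))]
  have h1 : (Complex.I * ω) * ((-τ : ℝ) : ℂ) = ((-(ω*τ) : ℝ) : ℂ) * Complex.I := by
    push_cast; ring
  rw [h1, Complex.exp_mul_I,
    show (Complex.I * ω) * ((0:ℝ):ℂ) = 0 by simp, Complex.exp_zero]
  push_cast
  rw [Complex.cos_neg, Complex.sin_neg]
  field_simp
  ring_nf
  simp only [Complex.I_sq]
  ring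

lemma trig1 {x : ℝ} (h0 : 0 < x) (hπ : x < Real.pi) :
    x * Real.sin x < 2 * (1 - Real.cos x) := by
  have hu0 : 0 < x / 2 := by linarith
  have hu : x / 2 < Real.pi / 2 := by linarith
  have hc : 0 < Real.cos (x/2) := Real.cos_pos_of_mem_Ioo ⟨by linarith, hu⟩
  have hs : 0 < Real.sin (x/2) := Real.sin_pos_of_pos_of_lt_pi hu0 (by linarith [Real.pi_pos])
  have ht : x / 2 < Real.tan (x/2) := Real.lt_tan hu0 hu
  rw [Real.tan_eq_sin_div_cos, lt_div_iff₀ hc] at ht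
  have hsin : Real.sin x = 2 * Real.sin (x/2) * Real.cos (x/2) := by
    rw [← Real.sin_two_mul]; ring_nf
  have hcos : Real.cos x = 2 * Real.cos (x/2)^2 - 1 := by
    rw [← Real.cos_two_mul]; ring_nf
  have hpy := Real.sin_sq_add_cos_sq (x/2)
  nlinarith [hs, ht, hc]

lemma trig2 {x : ℝ} (h0 : 0 < x) (hπ : x < Real.pi) :
    x * Real.cos x < Real.sin x := by
  have hs : 0 < Real.sin x := Real.sin_pos_of_pos_of_lt_pi h0 hπ
  rcases lt_or_ge x (Real.pi/2) with h | h
  · have hc : 0 < Real.cos x := Real.cos_pos_of_mem_Ioo ⟨by linarith, h⟩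
    have ht : x < Real.tan x := Real.lt_tan h0 h
    rw [Real.tan_eq_sin_div_cos, lt_div_iff₀ hc] at ht
    linarith
  · have hc : Real.cos x ≤ 0 :=
      Real.cos_nonpos_of_pi_div_two_le_of_le h (by linarith [Real.pi_pos])
    nlinarith

lemma charFnD_re_im (β₀ β₁ τ ω : ℝ) (hω : ω ≠ 0) :
    (charFnD β₀ β₁ τ (Complex.I * ω)).re
      = 1 - (2*β₀*β₁/τ) * ((1 - Real.cos (ω*τ) - (ω*τ)*Real.sin (ω*τ))/ω^2) ∧
    (charFnD β₀ β₁ τ (Complex.I * ω)).im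
      = -((2*β₀*β₁/τ) * ((Real.sin (ω*τ) - (ω*τ)*Real.cos (ω*τ))/ω^2)) := by
  rw [charFnD, key_integral ω τ hω]
  constructor <;>
    simp only [Complex.sub_re, Complex.one_re, Complex.mul_re, Complex.ofReal_re,
      Complex.ofReal_im, Complex.add_re, Complex.add_im, Complex.mul_im, Complex.I_re,
      Complex.I_im, Complex.sub_im, Complex.one_im] <;> ring

/-- Lemma 2 of the paper: at the critical pair `(ω_c, τ_c)`, with
`ω_c τ_c ∈ (0, π)`, both the real and the imaginary part of `Δ_λ(iω_c, τ_c)` are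
positive; in particular `Δ_λ(± iω_c, τ_c) ≠ 0`, so `± iω_c` are simple zeros of
`Δ(·, τ_c)`. -/
theorem charFnD_re_im_pos
    (δ β₀ β₁ ω_c τ_c : ℝ) (hδ : 0 < δ) (hβ₀ : 0 < β₀)
    (hβ₁ : β₁ < -δ / (β₀ * (1 - 2 * hfun xZero)))
    (hω_c : 0 < ω_c) (hτ_c : 0 < τ_c)
    (hx_c : ω_c * τ_c ∈ Set.Ioo 0 Real.pi)
    (hsys : sys δ β₀ β₁ ω_c τ_c) :
    0 < (charFnD β₀ β₁ τ_c (Complex.I * (ω_c : ℂ))).re ∧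
    0 < (charFnD β₀ β₁ τ_c (Complex.I * (ω_c : ℂ))).im ∧
    charFnD β₀ β₁ τ_c (Complex.I * (ω_c : ℂ)) ≠ 0 ∧
    charFnD β₀ β₁ τ_c (-(Complex.I * (ω_c : ℂ))) ≠ 0 := by
  obtain ⟨hx0, hxπ⟩ := hx_c
  set x := ω_c * τ_c with hxdef
  have hωne : ω_c ≠ 0 := ne_of_gt hω_c
  have hτne : τ_c ≠ 0 := ne_of_gt hτ_c
  have hxne : x ≠ 0 := ne_of_gt hx0
  have hcos1 : Real.cos x < 1 := by
    have := Real.cos_lt_cos_of_nonneg_of_le_pi le_rfl hxπ.le hx0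
    simpa using this
  have hd : Real.cos x - 1 < 0 := by linarith
  have hdne : Real.cos x - 1 ≠ 0 := ne_of_lt hd
  have hβ₁ne : 2 * β₀ * β₁ * τ_c ≠ 0 := by
    intro h
    have h2 := hsys.2
    rw [h, div_zero] at h2
    exact (div_ne_zero hdne (by positivity)) h2
  have hcross : (Real.cos x - 1) * (2 * β₀ * β₁ * τ_c) = x ^ 2 := by
    have h2 := hsys.2
    rw [div_eq_div_iff (pow_ne_zero 2 (mul_ne_zero hωne hτne)) hβ₁ne, ← hxdef] at h2
    linear_combination h2
  have hA := trig1 hx0 hxπ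
  have hB := trig2 hx0 hxπ
  -- real part, valid for both ω_c and -ω_c
  have hre : ∀ ω : ℝ, ω ≠ 0 → (ω * τ_c = x ∨ ω * τ_c = -x) →
      (charFnD β₀ β₁ τ_c (Complex.I * ω)).re
        = 1 - ((1 - Real.cos x - x * Real.sin x) / (Real.cos x - 1)) := by
    intro ω hω hcase
    rw [(charFnD_re_im β₀ β₁ τ_c ω hω).1]
    have hsq : (ω * τ_c) ^ 2 = x ^ 2 := by rcases hcase with h | h <;> rw [h] <;> ring
    have hω2 : ω ^ 2 = x ^ 2 / τ_c ^ 2 := by field_simp; linear_combination hsq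
    have hCω : (2*β₀*β₁/τ_c) / ω^2 = 1 / (Real.cos x - 1) := by
      rw [hω2]; field_simp; linear_combination hcross
    have hval : (1 - Real.cos (ω*τ_c) - (ω*τ_c)*Real.sin (ω*τ_c))
        = 1 - Real.cos x - x * Real.sin x := by
      rcases hcase with h | h <;> rw [h] <;> simp [Real.cos_neg, Real.sin_neg] <;> ring
    rw [hval]
    have h5 : (2*β₀*β₁/τ_c) * ((1 - Real.cos x - x * Real.sin x)/ω^2)
        = ((2*β₀*β₁/τ_c)/ω^2) * (1 - Real.cos x - x * Real.sin x) := by ring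
    rw [h5, hCω]
    ring
  have hrepos : (0:ℝ) < 1 - ((1 - Real.cos x - x * Real.sin x) / (Real.cos x - 1)) := by
    have heq : 1 - ((1 - Real.cos x - x * Real.sin x) / (Real.cos x - 1))
        = ((Real.cos x - 1) - (1 - Real.cos x - x * Real.sin x)) / (Real.cos x - 1) := by
      field_simp
    rw [heq]
    apply div_pos_of_neg_of_neg _ hd
    nlinarith
  have hre1 : 0 < (charFnD β₀ β₁ τ_c (Complex.I * (ω_c : ℂ))).re := by
    rw [hre ω_c hωne (Or.inl rfl)]; exact hrepos
  have hre2 : 0 < (charFnD β₀ β₁ τ_c (Complex.I * ((-ω_c : ℝ) : ℂ))).re := by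
    rw [hre (-ω_c) (neg_ne_zero.mpr hωne) (Or.inr (by rw [hxdef]; ring))]; exact hrepos
  have hCc : (2*β₀*β₁/τ_c) / ω_c^2 = 1 / (Real.cos x - 1) := by
    have hsqc : (ω_c * τ_c) ^ 2 = x ^ 2 := by rw [hxdef]
    have hω2 : ω_c ^ 2 = x ^ 2 / τ_c ^ 2 := by field_simp; linear_combination hsqc
    rw [hω2]; field_simp; linear_combination hcross
  have him1 : 0 < (charFnD β₀ β₁ τ_c (Complex.I * (ω_c : ℂ))).im := by
    rw [(charFnD_re_im β₀ β₁ τ_c ω_c hωne).2]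
    have h5 : (2*β₀*β₁/τ_c) * ((Real.sin (ω_c*τ_c) - (ω_c*τ_c) * Real.cos (ω_c*τ_c))/ω_c^2)
        = ((2*β₀*β₁/τ_c)/ω_c^2) * (Real.sin x - x * Real.cos x) := by rw [← hxdef]; ring
    rw [h5, hCc]
    have hBpos : 0 < Real.sin x - x * Real.cos x := by linarith
    have hcneg : 1 / (Real.cos x - 1) < 0 := div_neg_of_pos_of_neg one_pos hd
    exact neg_pos.mpr (mul_neg_of_neg_of_pos hcneg hBpos)
  refine ⟨hre1, him1, ?_, ?_⟩
  · intro h; rw [h] at hre1; simp at hre1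
  · have hneg : -(Complex.I * (ω_c : ℂ)) = Complex.I * ((-ω_c : ℝ) : ℂ) := by
      push_cast; ring
    rw [hneg]
    intro h; rw [h] at hre2; simp at hre2
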